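/- (RS − SR)X and (RS − SR)Y are scalar multiples of W if and only if both μ(β²ν − α(4c + λν − μ²)) = 0 and β²(μ² − ν²) = (4c + λν − μ²)(α(λ − ν) − β²). -/

import Mathlib

open Matrix

/-- The wedge operator `(u ∧ v)w = ⟨v,w⟩u − ⟨u,w⟩v` as a 3×3 matrix. -/
def wedge3 (u v : Fin 3 → ℝ) : Matrix (Fin 3) (Fin 3) ℝ :=
  Matrix.vecMulVec u v - Matrix.vecMulVec v u

set_option maxHeartbeats 2000000 in
/-- (RS − SR)X and (RS − SR)Y are multiples of W iff
μ(β²ν − α(4c + λν − μ²)) = 0 and β²(μ² − ν²) = (4c + λν − μ²)(α(λ − ν) − β²). -/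
theorem pseudo_ryan_criteria
    (α β lam μ ν c : ℝ) (hc : c ≠ 0)
    (W X Y : Fin 3 → ℝ)
    (hWdef : W = ![1, 0, 0]) (hXdef : X = ![0, 1, 0]) (hYdef : Y = ![0, 0, 1])
    (A φ S R : Matrix (Fin 3) (Fin 3) ℝ)
    (hA : A = !![α, β, 0; β, lam, μ; 0, μ, ν])
    (hφ : φ = !![0, 0, 0; 0, 0, -1; 0, 1, 0])
    (hS : S = (5 * c) • (1 : Matrix (Fin 3) (Fin 3) ℝ) - (3 * c) • Matrix.vecMulVec W W
        + (α + lam + ν) • A - A * A)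
    (hR : R = wedge3 (A.mulVec X) (A.mulVec Y)
        + c • (wedge3 X Y + wedge3 (φ.mulVec X) (φ.mulVec Y) + (2 * (X ⬝ᵥ φ.mulVec Y)) • φ)) :
    ((∃ t : ℝ, (R * S - S * R).mulVec X = t • W) ∧
     (∃ t : ℝ, (R * S - S * R).mulVec Y = t • W)) ↔
    (μ * (β ^ 2 * ν - α * (4 * c + lam * ν - μ ^ 2)) = 0 ∧
     β ^ 2 * (μ ^ 2 - ν ^ 2) = (4 * c + lam * ν - μ ^ 2) * (α * (lam - ν) - β ^ 2)) := by
  subst hWdef hXdef hYdef hA hφ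
  have hM : (R * S - S * R : Matrix (Fin 3) (Fin 3) ℝ) =
      !![0, -(β*c*μ), -(β*c*ν) + β^3*ν + α*β*μ^2 - α*β*lam*ν;
         -(β*c*μ),
         -2*(β^2*μ*ν + α*μ^3 - α*lam*μ*ν - 4*α*c*μ),
         -(β^2*ν^2) + β^2*lam*ν + 4*β^2*c - α*μ^2*ν + α*lam*ν^2 + α*lam*μ^2 - α*lam^2*ν + 4*α*c*ν - 4*α*c*lam;
         -(β*c*ν) + β^3*ν + α*β*μ^2 - α*β*lam*ν,
         -(β^2*ν^2) + β^2*lam*ν + 4*β^2*c - α*μ^2*ν + α*lam*ν^2 + α*lam*μ^2 - α*lam^2*ν + 4*α*c*ν - 4*α*c*lam,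
         2*(β^2*μ*ν + α*μ^3 - α*lam*μ*ν - 4*α*c*μ)] := by
    have hS' : S = !![2*c - β^2 + α*ν + α*lam, β*ν, -(β*μ);
        β*ν, -μ^2 + lam*ν + 5*c - β^2 + α*lam, α*μ;
        -(β*μ), α*μ, -μ^2 + lam*ν + 5*c + α*ν] := by
      subst hS
      ext i j
      fin_cases i <;> fin_cases j <;>
        simp [Matrix.mul_apply, Matrix.vecMulVec, Fin.sum_univ_succ, Matrix.one_apply] <;> ring
    have hR' : R = !![0, β*μ, β*ν;
        -(β*μ), 0, -μ^2 + lam*ν + 4*c;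
        -(β*ν), μ^2 - lam*ν - 4*c, 0] := by
      subst hR
      ext i j
      fin_cases i <;> fin_cases j <;>
        simp [wedge3, Matrix.mulVec, Matrix.vecMulVec, dotProduct,
          Fin.sum_univ_succ, Matrix.vecHead, Matrix.vecTail] <;> ring
    rw [hS', hR']
    ext i j
    fin_cases i <;> fin_cases j <;>
      simp [Matrix.mul_apply, Fin.sum_univ_succ] <;> ring
  rw [hM]
  constructor
  · rintro ⟨⟨t1, h1⟩, ⟨t2, h2⟩⟩
    have e1 := congrFun h1 1
    have e2 := congrFun h1 2
    have e3 := congrFun h2 1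
    have e4 := congrFun h2 2
    simp [Matrix.mulVec, dotProduct, Fin.sum_univ_succ] at e1 e2 e3 e4
    constructor
    · linear_combination e1
    · linear_combination e2
  · rintro ⟨h1, h2⟩
    constructor
    · refine ⟨-(β*c*μ), ?_⟩
      funext i
      fin_cases i <;>
        simp [Matrix.mulVec, dotProduct, Fin.sum_univ_succ]
      · linear_combination h1
      · linear_combination h2
    · refine ⟨-(β*c*ν) + β^3*ν + α*β*μ^2 - α*β*lam*ν, ?_⟩
      funext i
      fin_cases i <;>
        simp [Matrix.mulVec, dotProduct, Fin.sum_univ_succ]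
      · linear_combination h2
      · linear_combination h1
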